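/- Let τ be a Borel probability measure on ℝ² invariant with respect to (π/2)-rotations and let φ₀ be the characteristic function of a Borel probability measure on ℝ. Then for every ξ ∈ ℝ the following three integrals vanish: ∫_{ℝ²} Re φ₀(lξ) · Im φ₀(rξ) τ(dl dr) = 0, ∫_{ℝ²} Im φ₀(lξ) · Re φ₀(rξ) τ(dl dr) = 0, and ∫_{ℝ²} Im φ₀(lξ) · Im φ₀(rξ) τ(dl dr) = 0. Consequently, ∫_{ℝ²} φ₀(lξ) φ₀(rξ) τ(dl dr) = ∫_{ℝ²} Re φ₀(lξ) · Re φ₀(rξ) τ(dl dr). -/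

import Mathlib

open MeasureTheory Filter Set

noncomputable section

/-- Characteristic function of a measure on `ℝ`. -/
def charFn (μ : Measure ℝ) (ξ : ℝ) : ℂ :=
  ∫ v, Complex.exp (Complex.I * ((ξ * v : ℝ) : ℂ)) ∂μ

/-- `τ` is invariant with respect to `(π/2)`-rotations. -/
def RotationInvariant (τ : Measure (ℝ × ℝ)) : Prop :=
  Measure.map (fun q : ℝ × ℝ => (-q.2, q.1)) τ = τ

lemma charFn_continuous (μ : Measure ℝ) [IsProbabilityMeasure μ] :
    Continuous (charFn μ) := by
  apply continuous_of_dominated (bound := fun _ => (1:ℝ))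
  · intro x
    exact (Continuous.aestronglyMeasurable (by continuity))
  · intro x
    filter_upwards with v
    simp [Complex.norm_exp, Complex.mul_re]
  · exact integrable_const 1
  · filter_upwards with v
    continuity

lemma charFn_norm_le (μ : Measure ℝ) [IsProbabilityMeasure μ] (x : ℝ) :
    ‖charFn μ x‖ ≤ 1 := by
  calc ‖charFn μ x‖ ≤ ∫ v, ‖Complex.exp (Complex.I * ((x * v : ℝ) : ℂ))‖ ∂μ :=
        norm_integral_le_integral_norm _
    _ = ∫ _v, (1:ℝ) ∂μ := by
        congr 1; funext v
        simp [Complex.norm_exp, Complex.mul_re]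
    _ = 1 := by simp

lemma charFn_neg (μ : Measure ℝ) (x : ℝ) :
    charFn μ (-x) = starRingEnd ℂ (charFn μ x) := by
  unfold charFn
  rw [← integral_conj]
  congr 1
  funext v
  rw [← Complex.exp_conj, map_mul, Complex.conj_I, Complex.conj_ofReal]
  push_cast
  ring_nf

lemma rot_int (τ : Measure (ℝ × ℝ)) (hrot : RotationInvariant τ)
    (f : ℝ × ℝ → ℝ) (hf : AEStronglyMeasurable f τ) :
    ∫ q, f q ∂τ = ∫ q, f (-q.2, q.1) ∂τ := by
  conv_lhs => rw [← hrot]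
  rw [integral_map (Measurable.aemeasurable (f := fun q : ℝ × ℝ => (-q.2, q.1)) (measurable_snd.neg.prodMk measurable_fst))]
  rw [hrot]
  exact hf

/-- for a `(π/2)`-rotation invariant `τ`, the three mixed real/imaginary
integrals vanish, and hence the Wild integral of `φ₀` equals that of its real part. -/
theorem stmt18 (τ : Measure (ℝ × ℝ)) [IsProbabilityMeasure τ]
    (hrot : RotationInvariant τ)
    (μ₀ : Measure ℝ) [IsProbabilityMeasure μ₀]
    (φ₀ : ℝ → ℂ) (hφ₀ : φ₀ = charFn μ₀) (ξ : ℝ) :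
    (∫ q : ℝ × ℝ, (φ₀ (q.1 * ξ)).re * (φ₀ (q.2 * ξ)).im ∂τ) = 0 ∧
    (∫ q : ℝ × ℝ, (φ₀ (q.1 * ξ)).im * (φ₀ (q.2 * ξ)).re ∂τ) = 0 ∧
    (∫ q : ℝ × ℝ, (φ₀ (q.1 * ξ)).im * (φ₀ (q.2 * ξ)).im ∂τ) = 0 ∧
    (∫ q : ℝ × ℝ, φ₀ (q.1 * ξ) * φ₀ (q.2 * ξ) ∂τ) =
      ∫ q : ℝ × ℝ, (((φ₀ (q.1 * ξ)).re * (φ₀ (q.2 * ξ)).re : ℝ) : ℂ) ∂τ := by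
  subst hφ₀
  set g : ℝ → ℝ := fun x => (charFn μ₀ (x * ξ)).re with hg
  set h : ℝ → ℝ := fun x => (charFn μ₀ (x * ξ)).im with hh
  have hcont := charFn_continuous μ₀
  have hgc : Continuous g := Complex.continuous_re.comp (hcont.comp (continuous_id.mul continuous_const))
  have hhc : Continuous h := Complex.continuous_im.comp (hcont.comp (continuous_id.mul continuous_const))
  have hgeven : ∀ x, g (-x) = g x := by
    intro x
    simp only [hg, neg_mul, charFn_neg, Complex.conj_re]
  have hhodd : ∀ x, h (-x) = -h x := by
    intro x
    simp only [hh, neg_mul, charFn_neg, Complex.conj_im]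
  have hgb : ∀ x, |g x| ≤ 1 := fun x =>
    le_trans (Complex.abs_re_le_norm _) (charFn_norm_le μ₀ _)
  have hhb : ∀ x, |h x| ≤ 1 := fun x =>
    le_trans (Complex.abs_im_le_norm _) (charFn_norm_le μ₀ _)
  -- generic integrability of products of bounded continuous compositions
  have hintP : ∀ (u v : ℝ → ℝ), Continuous u → Continuous v → (∀ x, |u x| ≤ 1) →
      (∀ x, |v x| ≤ 1) → Integrable (fun q : ℝ × ℝ => u q.1 * v q.2) τ := by
    intro u v hu hv hub hvb
    apply (integrable_const (1:ℝ)).mono'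
      ((hu.comp continuous_fst).mul (hv.comp continuous_snd)).aestronglyMeasurable
    filter_upwards with q
    rw [Real.norm_eq_abs, Pi.mul_apply, abs_mul]
    calc |u q.1| * |v q.2| ≤ 1 * 1 := mul_le_mul (hub _) (hvb _) (abs_nonneg _) zero_le_one
      _ = 1 := one_mul 1
  -- A = ∫ g q.1 * h q.2, B = ∫ g q.2 * h q.1
  have hAB : (∫ q : ℝ × ℝ, g q.1 * h q.2 ∂τ) = ∫ q : ℝ × ℝ, g q.2 * h q.1 ∂τ := by
    rw [rot_int τ hrot (fun q : ℝ × ℝ => g q.1 * h q.2)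
      (Continuous.aestronglyMeasurable (by exact (hgc.comp continuous_fst).mul (hhc.comp continuous_snd)))]
    simp only [hgeven]
  have hBA : (∫ q : ℝ × ℝ, g q.2 * h q.1 ∂τ) = -∫ q : ℝ × ℝ, g q.1 * h q.2 ∂τ := by
    rw [rot_int τ hrot (fun q : ℝ × ℝ => g q.2 * h q.1)
      (Continuous.aestronglyMeasurable (by exact (hgc.comp continuous_snd).mul (hhc.comp continuous_fst)))]
    rw [← integral_neg]
    congr 1
    funext q
    simp only [hhodd]
    ring
  have hA0 : (∫ q : ℝ × ℝ, g q.1 * h q.2 ∂τ) = 0 := by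
    have := hAB.trans hBA
    linarith
  have hB0 : (∫ q : ℝ × ℝ, g q.2 * h q.1 ∂τ) = 0 := hAB ▸ hA0
  have hC0 : (∫ q : ℝ × ℝ, h q.1 * h q.2 ∂τ) = 0 := by
    have := rot_int τ hrot (fun q : ℝ × ℝ => h q.1 * h q.2)
      (Continuous.aestronglyMeasurable (by exact (hhc.comp continuous_fst).mul (hhc.comp continuous_snd)))
    rw [show (∫ q : ℝ × ℝ, (fun q : ℝ × ℝ => h q.1 * h q.2) (-q.2, q.1) ∂τ)
        = -∫ q : ℝ × ℝ, h q.1 * h q.2 ∂τ by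
      rw [← integral_neg]; congr 1; funext q; simp only [hhodd]; ring] at this
    linarith
  have hB0' : (∫ q : ℝ × ℝ, h q.1 * g q.2 ∂τ) = 0 := by
    rw [show (fun q : ℝ × ℝ => h q.1 * g q.2) = fun q : ℝ × ℝ => g q.2 * h q.1 by
      funext q; ring]
    exact hB0
  refine ⟨hA0, hB0', hC0, ?_⟩
  -- final complex identity
  have hintC : Integrable (fun q : ℝ × ℝ => charFn μ₀ (q.1 * ξ) * charFn μ₀ (q.2 * ξ)) τ := by
    apply (integrable_const (1:ℝ)).mono'
      (((hcont.comp (continuous_fst.mul continuous_const)).mul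
        (hcont.comp (continuous_snd.mul continuous_const))).aestronglyMeasurable)
    filter_upwards with q
    rw [Pi.mul_apply, norm_mul]
    calc ‖charFn μ₀ (q.1 * ξ)‖ * ‖charFn μ₀ (q.2 * ξ)‖ ≤ 1 * 1 :=
      mul_le_mul (charFn_norm_le μ₀ _) (charFn_norm_le μ₀ _) (norm_nonneg _) zero_le_one
      _ = 1 := one_mul 1
  have hint2 : Integrable (fun q : ℝ × ℝ => (((charFn μ₀ (q.1 * ξ)).re * (charFn μ₀ (q.2 * ξ)).re : ℝ) : ℂ)) τ :=
    (hintP g g hgc hgc hgb hgb).ofReal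
  have h1 := integral_re (𝕜 := ℂ) hintC
  have h2 := integral_re (𝕜 := ℂ) hint2
  have h3 := integral_im (𝕜 := ℂ) hintC
  have h4 := integral_im (𝕜 := ℂ) hint2
  simp only [RCLike.re_to_complex, RCLike.im_to_complex] at h1 h2 h3 h4
  apply Complex.ext
  · rw [← h1, ← h2]
    simp only [Complex.mul_re, Complex.ofReal_re]
    rw [integral_sub (hintP g g hgc hgc hgb hgb) (hintP h h hhc hhc hhb hhb)]
    rw [hC0]
    simp
    rfl
  · rw [← h3, ← h4]
    simp only [Complex.mul_im, Complex.ofReal_im]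
    rw [integral_add (hintP g h hgc hhc hgb hhb)
      (show Integrable (fun q : ℝ × ℝ => h q.1 * g q.2) τ by
        have := hintP h g hhc hgc hhb hgb; exact this)]
    rw [hA0, hB0']
    simp
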